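/- arXiv:2306.15461 — 3 statements merged into one kernel-verified Lean document; each statement's English description precedes it below -/
import Mathlib

section
/- Let T : G(9₄₈) → G(9₄₈) be any group homomorphism satisfying T(x₁) = x₃, T(x₂) = x₆⁻¹x₃x₆, T(x₃) = x₉, T(x₄) = x₆, T(x₅) = x₁x₆x₁⁻¹, T(x₆) = x₁, T(x₇) = x₁x₄x₁⁻¹, T(x₈) = x₄, T(x₉) = x₁x₈x₁⁻¹. Then the third power T³ = T ∘ T ∘ T satisfies: T³(x₁) = x₁x₈x₁⁻¹, T³(x₂) = x₁x₄x₁⁻¹, T³(x₃) = x₃x₄x₃⁻¹, T³(x₄) = x₃, T³(x₅) = x₉x₃x₉⁻¹, T³(x₆) = x₉, T³(x₇) = x₁x₆x₁⁻¹, T³(x₈) = x₁, T³(x₉) = x₉x₆x₉⁻¹. -/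
/-- Relators of the Wirtinger presentation of the group of the knot `9₄₈`.
Generator `i : Fin 9` stands for `xᵢ₊₁`; the relation `a b a⁻¹ = c` is encoded
as the relator `a * b * a⁻¹ * c⁻¹`. -/
def rels948 : Set (FreeGroup (Fin 9)) :=
  let x : Fin 9 → FreeGroup (Fin 9) := FreeGroup.of
  { x 0 * x 1 * (x 0)⁻¹ * (x 2)⁻¹,
    x 3 * x 1 * (x 3)⁻¹ * (x 0)⁻¹,
    x 1 * x 3 * (x 1)⁻¹ * (x 7)⁻¹,
    x 5 * x 7 * (x 5)⁻¹ * (x 6)⁻¹,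
    x 6 * x 0 * (x 6)⁻¹ * (x 5)⁻¹,
    x 0 * x 6 * (x 0)⁻¹ * (x 8)⁻¹,
    x 4 * x 8 * (x 4)⁻¹ * (x 2)⁻¹,
    x 2 * x 5 * (x 2)⁻¹ * (x 4)⁻¹,
    x 5 * x 3 * (x 5)⁻¹ * (x 4)⁻¹ }

/-- The group `G(9₄₈)` of the knot `9₄₈`, given by its Wirtinger presentation. -/
def G948 : Type := PresentedGroup rels948

instance : Group G948 := by unfold G948; infer_instance

/-- The image `xᵢ₊₁` of the `i`-th generator in `G(9₄₈)`. -/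
def x948 (i : Fin 9) : G948 := PresentedGroup.of i

lemma relconj948 (i j k : Fin 9)
    (h : FreeGroup.of i * FreeGroup.of j * (FreeGroup.of i)⁻¹ * (FreeGroup.of k)⁻¹ ∈ rels948) :
    x948 i * x948 j * (x948 i)⁻¹ = x948 k := by
  have h1 : PresentedGroup.mk rels948
      (FreeGroup.of i * FreeGroup.of j * (FreeGroup.of i)⁻¹ * (FreeGroup.of k)⁻¹) = 1 :=
    (QuotientGroup.eq_one_iff _).mpr (Subgroup.subset_normalClosure h)
  simp only [map_mul, map_inv] at h1
  have := mul_eq_one_iff_eq_inv.mp h1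
  exact this

/-- Any endomorphism `T` of `G(9₄₈)` with the prescribed action on the generators
has third power `T³` acting by `T³(x₁) = x₁x₈x₁⁻¹`, `T³(x₂) = x₁x₄x₁⁻¹`,
`T³(x₃) = x₃x₄x₃⁻¹`, `T³(x₄) = x₃`, `T³(x₅) = x₉x₃x₉⁻¹`, `T³(x₆) = x₉`,
`T³(x₇) = x₁x₆x₁⁻¹`, `T³(x₈) = x₁`, `T³(x₉) = x₉x₆x₉⁻¹`. -/
theorem T_cubed_action (T : G948 →* G948)
    (h1 : T (x948 0) = x948 2)
    (h2 : T (x948 1) = (x948 5)⁻¹ * x948 2 * x948 5)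
    (h3 : T (x948 2) = x948 8)
    (h4 : T (x948 3) = x948 5)
    (h5 : T (x948 4) = x948 0 * x948 5 * (x948 0)⁻¹)
    (h6 : T (x948 5) = x948 0)
    (h7 : T (x948 6) = x948 0 * x948 3 * (x948 0)⁻¹)
    (h8 : T (x948 7) = x948 3)
    (h9 : T (x948 8) = x948 0 * x948 7 * (x948 0)⁻¹) :
    T (T (T (x948 0))) = x948 0 * x948 7 * (x948 0)⁻¹ ∧
    T (T (T (x948 1))) = x948 0 * x948 3 * (x948 0)⁻¹ ∧
    T (T (T (x948 2))) = x948 2 * x948 3 * (x948 2)⁻¹ ∧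
    T (T (T (x948 3))) = x948 2 ∧
    T (T (T (x948 4))) = x948 8 * x948 2 * (x948 8)⁻¹ ∧
    T (T (T (x948 5))) = x948 8 ∧
    T (T (T (x948 6))) = x948 0 * x948 5 * (x948 0)⁻¹ ∧
    T (T (T (x948 7))) = x948 0 ∧
    T (T (T (x948 8))) = x948 8 * x948 5 * (x948 8)⁻¹ := by
  have r1 : x948 0 * x948 1 * (x948 0)⁻¹ = x948 2 := relconj948 0 1 2 (by simp [rels948])
  have r3 : x948 1 * x948 3 * (x948 1)⁻¹ = x948 7 := relconj948 1 3 7 (by simp [rels948])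
  have r5 : x948 6 * x948 0 * (x948 6)⁻¹ = x948 5 := relconj948 6 0 5 (by simp [rels948])
  have r6 : x948 0 * x948 6 * (x948 0)⁻¹ = x948 8 := relconj948 0 6 8 (by simp [rels948])
  refine ⟨?_, ?_, ?_, ?_, ?_, ?_, ?_, ?_, ?_⟩ <;>
    simp only [map_mul, map_inv, h1, h2, h3, h4, h5, h6, h7, h8, h9]
  · rw [← r1, ← r3]; group
  · rw [← r6, ← r5]; group
end

section
/- Let T : G(9₄₈) → G(9₄₈) be any group homomorphism satisfying T(x₁) = x₃, T(x₂) = x₆⁻¹x₃x₆, T(x₃) = x₉, T(x₄) = x₆, T(x₅) = x₁x₆x₁⁻¹, T(x₆) = x₁, T(x₇) = x₁x₄x₁⁻¹, T(x₈) = x₄, T(x₉) = x₁x₈x₁⁻¹. Then the sixth power T⁶ of T is the inner automorphism given by conjugation by x₁x₈: for every g ∈ G(9₄₈), T⁶(g) = (x₁x₈) g (x₁x₈)⁻¹. -/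
/-- Any relation of the presentation holds in `G(9₄₈)`. -/
lemma relG948 (a b c : Fin 9)
    (h : FreeGroup.of a * FreeGroup.of b * (FreeGroup.of a)⁻¹ * (FreeGroup.of c)⁻¹ ∈ rels948) :
    x948 a * x948 b * (x948 a)⁻¹ = x948 c := by
  have h1 : (PresentedGroup.mk rels948)
      (FreeGroup.of a * FreeGroup.of b * (FreeGroup.of a)⁻¹ * (FreeGroup.of c)⁻¹) = 1 :=
    (QuotientGroup.eq_one_iff _).mpr (Subgroup.subset_normalClosure h)
  simp only [map_mul, map_inv] at h1
  have h2 : x948 a * x948 b * (x948 a)⁻¹ * (x948 c)⁻¹ = 1 := h1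
  have := mul_eq_of_eq_mul_inv (a := x948 a * x948 b * (x948 a)⁻¹) (b := (1 : G948)) (c := x948 c)
  calc x948 a * x948 b * (x948 a)⁻¹
      = x948 a * x948 b * (x948 a)⁻¹ * (x948 c)⁻¹ * x948 c := by group
    _ = x948 c := by rw [h2]; group

lemma mem1 : FreeGroup.of (0:Fin 9) * FreeGroup.of 1 * (FreeGroup.of 0)⁻¹ * (FreeGroup.of 2)⁻¹ ∈ rels948 := by
  simp [rels948]
lemma mem2 : FreeGroup.of (3:Fin 9) * FreeGroup.of 1 * (FreeGroup.of 3)⁻¹ * (FreeGroup.of 0)⁻¹ ∈ rels948 := by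
  simp [rels948]
lemma mem3 : FreeGroup.of (1:Fin 9) * FreeGroup.of 3 * (FreeGroup.of 1)⁻¹ * (FreeGroup.of 7)⁻¹ ∈ rels948 := by
  simp [rels948]
lemma mem4 : FreeGroup.of (5:Fin 9) * FreeGroup.of 7 * (FreeGroup.of 5)⁻¹ * (FreeGroup.of 6)⁻¹ ∈ rels948 := by
  simp [rels948]
lemma mem5 : FreeGroup.of (6:Fin 9) * FreeGroup.of 0 * (FreeGroup.of 6)⁻¹ * (FreeGroup.of 5)⁻¹ ∈ rels948 := by
  simp [rels948]
lemma mem6 : FreeGroup.of (0:Fin 9) * FreeGroup.of 6 * (FreeGroup.of 0)⁻¹ * (FreeGroup.of 8)⁻¹ ∈ rels948 := by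
  simp [rels948]
lemma mem8 : FreeGroup.of (2:Fin 9) * FreeGroup.of 5 * (FreeGroup.of 2)⁻¹ * (FreeGroup.of 4)⁻¹ ∈ rels948 := by
  simp [rels948]

lemma e2' : x948 2 = x948 0 * x948 1 * (x948 0)⁻¹ := (relG948 0 1 2 mem1).symm
lemma e1' : x948 1 = (x948 3)⁻¹ * x948 0 * x948 3 := by
  rw [← relG948 3 1 0 mem2]; group
lemma e7a : x948 7 = x948 1 * x948 3 * (x948 1)⁻¹ := (relG948 1 3 7 mem3).symm
lemma e7b : x948 7 = (x948 5)⁻¹ * x948 6 * x948 5 := by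
  rw [← relG948 5 7 6 mem4]; group
lemma e5' : x948 5 = x948 6 * x948 0 * (x948 6)⁻¹ := (relG948 6 0 5 mem5).symm
lemma e8' : x948 8 = x948 0 * x948 6 * (x948 0)⁻¹ := (relG948 0 6 8 mem6).symm
lemma e4' : x948 4 = x948 2 * x948 5 * (x948 2)⁻¹ := (relG948 2 5 4 mem8).symm

/-- Any endomorphism `T` of `G(9₄₈)` with the prescribed action on the generators
has sixth power `T⁶` equal to conjugation by `x₁x₈`. -/
theorem T_sixth_power_is_conjugation (T : G948 →* G948)
    (h1 : T (x948 0) = x948 2)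
    (h2 : T (x948 1) = (x948 5)⁻¹ * x948 2 * x948 5)
    (h3 : T (x948 2) = x948 8)
    (h4 : T (x948 3) = x948 5)
    (h5 : T (x948 4) = x948 0 * x948 5 * (x948 0)⁻¹)
    (h6 : T (x948 5) = x948 0)
    (h7 : T (x948 6) = x948 0 * x948 3 * (x948 0)⁻¹)
    (h8 : T (x948 7) = x948 3)
    (h9 : T (x948 8) = x948 0 * x948 7 * (x948 0)⁻¹) :
    ∀ g : G948, T (T (T (T (T (T g))))) =
      (x948 0 * x948 7) * g * (x948 0 * x948 7)⁻¹ := by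
  have k0 : T (T (T (T (T (T (x948 0)))))) = (x948 0 * x948 7) * x948 0 * (x948 0 * x948 7)⁻¹ := by
    simp only [map_mul, map_inv, h1, h2, h3, h4, h5, h6, h7, h8, h9]; group
  have k7 : T (T (T (T (T (T (x948 7)))))) = (x948 0 * x948 7) * x948 7 * (x948 0 * x948 7)⁻¹ := by
    simp only [map_mul, map_inv, h1, h2, h3, h4, h5, h6, h7, h8, h9]; group
  have k1 : T (T (T (T (T (T (x948 1)))))) = (x948 0 * x948 7) * x948 1 * (x948 0 * x948 7)⁻¹ := by
    simp only [map_mul, map_inv, h1, h2, h3, h4, h5, h6, h7, h8, h9]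
    rw [e2', e7a, e1']; group
  have k2 : T (T (T (T (T (T (x948 2)))))) = (x948 0 * x948 7) * x948 2 * (x948 0 * x948 7)⁻¹ := by
    simp only [map_mul, map_inv, h1, h2, h3, h4, h5, h6, h7, h8, h9]
    rw [e2', e7a, e1']; group
  have k3 : T (T (T (T (T (T (x948 3)))))) = (x948 0 * x948 7) * x948 3 * (x948 0 * x948 7)⁻¹ := by
    simp only [map_mul, map_inv, h1, h2, h3, h4, h5, h6, h7, h8, h9]
    rw [e2', e7a, e1']; group
  have k5 : T (T (T (T (T (T (x948 5)))))) = (x948 0 * x948 7) * x948 5 * (x948 0 * x948 7)⁻¹ := by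
    simp only [map_mul, map_inv, h1, h2, h3, h4, h5, h6, h7, h8, h9]
    rw [e7b, e8', e5']; group
  have k6 : T (T (T (T (T (T (x948 6)))))) = (x948 0 * x948 7) * x948 6 * (x948 0 * x948 7)⁻¹ := by
    simp only [map_mul, map_inv, h1, h2, h3, h4, h5, h6, h7, h8, h9]
    rw [e7b, e8', e5']; group
  have k8 : T (T (T (T (T (T (x948 8)))))) = (x948 0 * x948 7) * x948 8 * (x948 0 * x948 7)⁻¹ := by
    simp only [map_mul, map_inv, h1, h2, h3, h4, h5, h6, h7, h8, h9]
    rw [e7b, e8', e5']; group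
  have k4 : T (T (T (T (T (T (x948 4)))))) = (x948 0 * x948 7) * x948 4 * (x948 0 * x948 7)⁻¹ := by
    conv_lhs => rw [e4']
    simp only [map_mul, map_inv]
    rw [k2, k5, e4']; group
  -- assemble into a homomorphism equality
  have key : ∀ i : Fin 9,
      T (T (T (T (T (T (x948 i)))))) = (x948 0 * x948 7) * x948 i * (x948 0 * x948 7)⁻¹ := by
    intro i
    fin_cases i
    exacts [k0, k1, k2, k3, k4, k5, k6, k7, k8]
  have hext : T.comp (T.comp (T.comp (T.comp (T.comp T)))) =
      (MulAut.conj (x948 0 * x948 7)).toMonoidHom := by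
    apply PresentedGroup.ext
    intro i
    exact key i
  intro g
  have := DFunLike.congr_fun hext g
  simpa [MulAut.conj_apply, mul_assoc] using this
end

section
/- Let T : G(9₄₈) → G(9₄₈) be any group homomorphism satisfying T(x₁) = x₃, T(x₂) = x₆⁻¹x₃x₆, T(x₃) = x₉, T(x₄) = x₆, T(x₅) = x₁x₆x₁⁻¹, T(x₆) = x₁, T(x₇) = x₁x₄x₁⁻¹, T(x₈) = x₄, T(x₉) = x₁x₈x₁⁻¹, and define S : G(9₄₈) → G(9₄₈) by S(g) = x₁⁻¹ · T³(g) · x₁. Then S satisfies: S(x₁) = x₈, S(x₂) = x₄, S(x₃) = x₁⁻¹x₃x₄x₃⁻¹x₁, S(x₄) = x₂, S(x₅) = x₁⁻¹x₉x₃x₉⁻¹x₁, S(x₆) = x₇, S(x₇) = x₆, S(x₈) = x₁, S(x₉) = x₁⁻¹x₉x₆x₉⁻¹x₁. -/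
lemma rel948 {a b c : Fin 9}
    (h : FreeGroup.of a * FreeGroup.of b * (FreeGroup.of a)⁻¹ * (FreeGroup.of c)⁻¹ ∈ rels948) :
    x948 a * x948 b * (x948 a)⁻¹ = x948 c := by
  have h1 : (QuotientGroup.mk (FreeGroup.of a * FreeGroup.of b * (FreeGroup.of a)⁻¹ *
      (FreeGroup.of c)⁻¹) : PresentedGroup rels948) = 1 :=
    (QuotientGroup.eq_one_iff _).mpr (Subgroup.subset_normalClosure h)
  have h2 : x948 a * x948 b * (x948 a)⁻¹ * (x948 c)⁻¹ = 1 := h1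
  calc x948 a * x948 b * (x948 a)⁻¹
      = (x948 a * x948 b * (x948 a)⁻¹ * (x948 c)⁻¹) * x948 c := by group
    _ = x948 c := by rw [h2]; group

lemma relR1 : x948 0 * x948 1 * (x948 0)⁻¹ = x948 2 :=
  rel948 (Set.mem_insert _ _)

lemma relR6 : x948 0 * x948 6 * (x948 0)⁻¹ = x948 8 := by
  apply rel948
  simp only [rels948]
  right; right; right; right; right; left; rfl

lemma relR8 : x948 2 * x948 5 * (x948 2)⁻¹ = x948 4 := by
  apply rel948
  simp only [rels948]
  right; right; right; right; right; right; right; left; rfl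

/-- For any endomorphism `T` of `G(9₄₈)` with the prescribed action on the generators,
the map `S : g ↦ x₁⁻¹ · T³(g) · x₁` satisfies `S(x₁) = x₈`, `S(x₂) = x₄`,
`S(x₃) = x₁⁻¹x₃x₄x₃⁻¹x₁`, `S(x₄) = x₂`, `S(x₅) = x₁⁻¹x₉x₃x₉⁻¹x₁`, `S(x₆) = x₇`,
`S(x₇) = x₆`, `S(x₈) = x₁`, `S(x₉) = x₁⁻¹x₉x₆x₉⁻¹x₁`. -/
theorem S_action (T : G948 →* G948)
    (h1 : T (x948 0) = x948 2)
    (h2 : T (x948 1) = (x948 5)⁻¹ * x948 2 * x948 5)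
    (h3 : T (x948 2) = x948 8)
    (h4 : T (x948 3) = x948 5)
    (h5 : T (x948 4) = x948 0 * x948 5 * (x948 0)⁻¹)
    (h6 : T (x948 5) = x948 0)
    (h7 : T (x948 6) = x948 0 * x948 3 * (x948 0)⁻¹)
    (h8 : T (x948 7) = x948 3)
    (h9 : T (x948 8) = x948 0 * x948 7 * (x948 0)⁻¹)
    (S : G948 → G948)
    (hS : ∀ g, S g = (x948 0)⁻¹ * T (T (T g)) * x948 0) :
    S (x948 0) = x948 7 ∧
    S (x948 1) = x948 3 ∧
    S (x948 2) = (x948 0)⁻¹ * x948 2 * x948 3 * (x948 2)⁻¹ * x948 0 ∧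
    S (x948 3) = x948 1 ∧
    S (x948 4) = (x948 0)⁻¹ * x948 8 * x948 2 * (x948 8)⁻¹ * x948 0 ∧
    S (x948 5) = x948 6 ∧
    S (x948 6) = x948 5 ∧
    S (x948 7) = x948 0 ∧
    S (x948 8) = (x948 0)⁻¹ * x948 8 * x948 5 * (x948 8)⁻¹ * x948 0 := by
  have e1 : (x948 0)⁻¹ * x948 2 * x948 0 = x948 1 := by rw [← relR1]; group
  have e6 : (x948 0)⁻¹ * x948 8 * x948 0 = x948 6 := by rw [← relR6]; group
  -- T² on generators
  have t2_0 : T (T (x948 0)) = x948 8 := by rw [h1, h3]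
  have t2_1 : T (T (x948 1)) = x948 6 := by
    rw [h2]; simp only [map_mul, map_inv, h3, h6]
    rw [← e6]
  have t2_2 : T (T (x948 2)) = x948 0 * x948 7 * (x948 0)⁻¹ := by rw [h3, h9]
  have t2_3 : T (T (x948 3)) = x948 0 := by rw [h4, h6]
  have t2_4 : T (T (x948 4)) = x948 2 * x948 0 * (x948 2)⁻¹ := by
    rw [h5]; simp only [map_mul, map_inv, h1, h6]
  have t2_5 : T (T (x948 5)) = x948 2 := by rw [h6, h1]
  have t2_6 : T (T (x948 6)) = x948 4 := by
    rw [h7]; simp only [map_mul, map_inv, h1, h4]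
    rw [← relR8]
  have t2_7 : T (T (x948 7)) = x948 5 := by rw [h8, h4]
  have t2_8 : T (T (x948 8)) = x948 2 * x948 3 * (x948 2)⁻¹ := by
    rw [h9]; simp only [map_mul, map_inv, h1, h8]
  refine ⟨?_, ?_, ?_, ?_, ?_, ?_, ?_, ?_, ?_⟩
  · rw [hS, t2_0, h9]; group
  · rw [hS, t2_1, h7]; group
  · rw [hS, t2_2]; simp only [map_mul, map_inv, h1, h8]; group
  · rw [hS, t2_3, h1, ← e1]
  · rw [hS, t2_4]; simp only [map_mul, map_inv, h1, h3]; group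
  · rw [hS, t2_5, h3, ← e6]
  · rw [hS, t2_6, h5]; group
  · rw [hS, t2_7, h6]; group
  · rw [hS, t2_8]; simp only [map_mul, map_inv, h3, h4]; group
end
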